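/- Let B and X be 2-nilpotent groups and let φ : B →* MulAut X be a group homomorphism, with b ∗ x := φ(b)(x), such that every φ(b) is a central automorphism of X, i.e., (b ∗ x)·x⁻¹ ∈ Z(X) for all b ∈ B and x ∈ X. Then the semidirect product X ⋊[φ] B is 2-nilpotent if and only if b' ∗ ((b ∗ x)·x⁻¹) = (b ∗ x)·x⁻¹ for all b, b' ∈ B and all x ∈ X. -/

import Mathlib

open scoped commutatorElement

private lemma cen_left {X : Type*} [Group X] {a : X} (x y : X)
    (ha : ∀ g : X, g * a = a * g) : ⁅a * x, y⁆ = ⁅x, y⁆ := by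
  calc ⁅a * x, y⁆ = a * (x * y * x⁻¹) * a⁻¹ * y⁻¹ := by
        rw [commutatorElement_def]; group
    _ = ⁅x, y⁆ := by rw [← ha (x * y * x⁻¹), commutatorElement_def]; group

private lemma cen_right {X : Type*} [Group X] {a : X} (x y : X)
    (ha : ∀ g : X, g * a = a * g) : ⁅x, a * y⁆ = ⁅x, y⁆ := by
  calc ⁅x, a * y⁆ = x * a * (y * x⁻¹ * y⁻¹) * a⁻¹ := by
        rw [commutatorElement_def]; group
    _ = a * (x * (y * x⁻¹ * y⁻¹)) * a⁻¹ := by rw [ha x]; group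
    _ = ⁅x, y⁆ := by rw [← ha (x * (y * x⁻¹ * y⁻¹)), commutatorElement_def]; group

private lemma word_aux {X : Type*} [Group X] (x y n1 n2 : X)
    (h1 : ∀ g : X, g * n1 = n1 * g) (h2 : ∀ g : X, g * n2 = n2 * g) :
    x * (n1 * y * ((n2 * x)⁻¹ * y⁻¹)) = n1 * (n2⁻¹ * ⁅x, y⁆) := by
  have h2' : ∀ g : X, g * n2⁻¹ = n2⁻¹ * g := fun g => Commute.inv_right (h2 g)
  calc x * (n1 * y * ((n2 * x)⁻¹ * y⁻¹))
      = x * n1 * (y * (x⁻¹ * (n2⁻¹ * y⁻¹))) := by group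
    _ = n1 * x * (y * (x⁻¹ * (n2⁻¹ * y⁻¹))) := by rw [h1 x]
    _ = n1 * ((x * y * x⁻¹) * n2⁻¹ * y⁻¹) := by group
    _ = n1 * (n2⁻¹ * (x * y * x⁻¹) * y⁻¹) := by rw [h2' (x * y * x⁻¹)]
    _ = n1 * (n2⁻¹ * ⁅x, y⁆) := by rw [commutatorElement_def]; group

/-- Let `B`, `X` be `2`-nilpotent groups and `φ : B →* MulAut X` act by
central automorphisms, i.e. `(b ∗ x) * x⁻¹ ∈ Z(X)` for all `b x` (with
`b ∗ x := φ b x`). Then the semidirect product `X ⋊[φ] B` is `2`-nilpotent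
if and only if `b' ∗ ((b ∗ x) * x⁻¹) = (b ∗ x) * x⁻¹` for all `b b' x`. -/
theorem semidirect_nil2_iff_fixed (B X : Type*) [Group B] [Group X]
    (hB : commutator B ≤ Subgroup.center B)
    (hX : commutator X ≤ Subgroup.center X)
    (φ : B →* MulAut X)
    (hc : ∀ (b : B) (x : X), φ b x * x⁻¹ ∈ Subgroup.center X) :
    commutator (X ⋊[φ] B) ≤ Subgroup.center (X ⋊[φ] B) ↔
      ∀ (b b' : B) (x : X), φ b' (φ b x * x⁻¹) = φ b x * x⁻¹ := by
  constructor
  · intro hG b b' x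
    have hmem : (⁅(⟨1, b⟩ : X ⋊[φ] B), ⟨x, 1⟩⁆) ∈ commutator (X ⋊[φ] B) :=
      commutator_def (X ⋊[φ] B) ▸ Subgroup.commutator_mem_commutator
        (Subgroup.mem_top _) (Subgroup.mem_top _)
    have hcen := Subgroup.mem_center_iff.mp (hG hmem) ⟨1, b'⟩
    have h2 := congrArg SemidirectProduct.left hcen
    simpa [commutatorElement_def, SemidirectProduct.mul_left, SemidirectProduct.mul_right,
      SemidirectProduct.inv_left, SemidirectProduct.inv_right, mul_assoc] using h2
  · intro h
    -- the automorphisms pairwise commute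
    have hpt : ∀ (e f : B) (w : X), φ e (φ f w) = φ f (φ e w) := by
      intro e f w
      have ce := Subgroup.mem_center_iff.mp (hc e w)
      calc φ e (φ f w) = φ e ((φ f w * w⁻¹) * w) := by rw [inv_mul_cancel_right]
        _ = (φ f w * w⁻¹) * φ e w := by rw [map_mul, h f e w]
        _ = (φ f w * w⁻¹) * ((φ e w * w⁻¹) * w) := by rw [inv_mul_cancel_right]
        _ = (φ e w * w⁻¹) * ((φ f w * w⁻¹) * w) := by
            rw [← mul_assoc, ce (φ f w * w⁻¹), mul_assoc]
        _ = (φ e w * w⁻¹) * φ f w := by rw [inv_mul_cancel_right]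
        _ = φ f (φ e w) := by rw [← h e f w, ← map_mul, inv_mul_cancel_right]
    have hbc1 : ∀ (e f : B) (w : X), φ e (φ f ((φ e)⁻¹ w)) = φ f w := by
      intro e f w; rw [hpt e f]; simp [MulAut.apply_inv_self]
    -- every automorphism fixes commutators of `X`
    have hcfix : ∀ (e : B) (u v : X), φ e ⁅u, v⁆ = ⁅u, v⁆ := by
      intro e u v
      rw [map_commutatorElement]
      have hu : φ e u = (φ e u * u⁻¹) * u := (inv_mul_cancel_right _ _).symm
      have hv : φ e v = (φ e v * v⁻¹) * v := (inv_mul_cancel_right _ _).symm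
      conv_lhs => rw [hu, hv]
      rw [cen_left _ _ (Subgroup.mem_center_iff.mp (hc e u)),
        cen_right _ _ (Subgroup.mem_center_iff.mp (hc e v))]
    rw [commutator_def, Subgroup.commutator_le]
    intro g _ k _
    rw [Subgroup.mem_center_iff]
    intro m
    obtain ⟨x, b⟩ := g; obtain ⟨y, c⟩ := k; obtain ⟨z, d⟩ := m
    -- the key element
    have hW : x * ((φ b) y * (((φ c) x)⁻¹ * y⁻¹))
        = (φ b y * y⁻¹) * ((φ c x * x⁻¹)⁻¹ * ⁅x, y⁆) := by
      have hby : (φ b) y = ((φ b) y * y⁻¹) * y := (inv_mul_cancel_right _ _).symm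
      have hcx : (φ c) x = ((φ c) x * x⁻¹) * x := (inv_mul_cancel_right _ _).symm
      conv_lhs => rw [hby, hcx]
      exact word_aux x y _ _ (Subgroup.mem_center_iff.mp (hc b y))
        (Subgroup.mem_center_iff.mp (hc c x))
    have hWd : (φ d) (x * ((φ b) y * (((φ c) x)⁻¹ * y⁻¹)))
        = x * ((φ b) y * (((φ c) x)⁻¹ * y⁻¹)) := by
      have e2 : (φ d) (((φ c) x * x⁻¹)⁻¹ * ⁅x, y⁆) = ((φ c) x * x⁻¹)⁻¹ * ⁅x, y⁆ := by
        rw [map_mul, map_inv, h c d x, hcfix]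
      rw [hW, map_mul (φ d) ((φ b) y * y⁻¹) ((((φ c) x * x⁻¹)⁻¹ * ⁅x, y⁆)), h b d y, e2]
    have hWcen : ∀ g : X, g * (x * ((φ b) y * (((φ c) x)⁻¹ * y⁻¹)))
        = (x * ((φ b) y * (((φ c) x)⁻¹ * y⁻¹))) * g := by
      intro g
      refine Subgroup.mem_center_iff.mp ?_ g
      rw [hW]
      exact mul_mem (hc b y) (mul_mem (inv_mem (hc c x))
        (hX (commutator_def X ▸ Subgroup.commutator_mem_commutator
          (Subgroup.mem_top _) (Subgroup.mem_top _))))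
    ext
    · simp only [commutatorElement_def, SemidirectProduct.mul_left, SemidirectProduct.mul_right,
        SemidirectProduct.inv_left, SemidirectProduct.inv_right, map_mul, map_inv, mul_assoc]
      simp only [hbc1, MulAut.apply_inv_self]
      simp only [map_mul, map_inv] at hWd
      rw [hWd, hWcen z]
      group
    · simp only [commutatorElement_def, SemidirectProduct.mul_left, SemidirectProduct.mul_right,
        SemidirectProduct.inv_left, SemidirectProduct.inv_right, mul_assoc]
      have hbcB : ⁅b, c⁆ ∈ Subgroup.center B :=
        hB (commutator_def B ▸ Subgroup.commutator_mem_commutator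
          (Subgroup.mem_top _) (Subgroup.mem_top _))
      simpa [commutatorElement_def, mul_assoc] using Subgroup.mem_center_iff.mp hbcB d
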